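/- arXiv:1502.01635 — 3 statements merged into one kernel-verified Lean document; each statement's English description precedes it below -/
import Mathlib

section
/- Let Ω ⊆ ℝⁿ be a bounded domain with C² boundary and let 𝒟 denote the Dirichlet–Neumann operator on ∂Ω: for smooth f on ∂Ω, 𝒟f = ∂u/∂ν on ∂Ω, where u is the harmonic extension of f to Ω and ν is the exterior unit normal. Then for every positive integer m ≥ 1 and every smooth f : ∂Ω → ℝ, the pointwise inequality (1/(2m)) 𝒟(f^{2m})(x) ≤ f(x)^{2m−1} · 𝒟f(x) holds for all x ∈ ∂Ω. -/
open MeasureTheory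

/-- The (ordinary) Laplacian `Δf(x) = Σ_j ∂²f/∂x_j²(x)` on `ℝⁿ = EuclideanSpace ℝ (Fin n)`. -/
noncomputable def laplacian {n : ℕ} (f : EuclideanSpace ℝ (Fin n) → ℝ)
    (x : EuclideanSpace ℝ (Fin n)) : ℝ :=
  ∑ i : Fin n, iteratedFDeriv ℝ 2 f x ![EuclideanSpace.single i 1, EuclideanSpace.single i 1]

open Filter Topology Set

section helpers

variable {n : ℕ}

lemma line_hasDerivAt {f : EuclideanSpace ℝ (Fin n) → ℝ} {x e : EuclideanSpace ℝ (Fin n)} {t : ℝ}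
    (hf : DifferentiableAt ℝ f (x + t • e)) :
    HasDerivAt (fun r : ℝ => f (x + r • e)) (fderiv ℝ f (x + t • e) e) t := by
  have hline : HasDerivAt (fun r : ℝ => x + r • e) e t := by
    simpa using ((hasDerivAt_id t).smul_const e).const_add x
  exact hf.hasFDerivAt.comp_hasDerivAt t hline

lemma line_hasDerivAt_clm {f : EuclideanSpace ℝ (Fin n) → ℝ} {s : Set (EuclideanSpace ℝ (Fin n))}
    (hs : IsOpen s) (hf : ContDiffOn ℝ 2 f s) {x : EuclideanSpace ℝ (Fin n)} (hx : x ∈ s)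
    (e : EuclideanSpace ℝ (Fin n)) :
    HasDerivAt (fun t : ℝ => fderiv ℝ f (x + t • e) e) (fderiv ℝ (fderiv ℝ f) x e e) 0 := by
  have h1 : ContDiffOn ℝ 1 (fderiv ℝ f) s := hf.fderiv_of_isOpen hs (by norm_num)
  have hdiff : DifferentiableAt ℝ (fderiv ℝ f) x :=
    ((h1.differentiableOn (by norm_num)) x hx).differentiableAt (hs.mem_nhds hx)
  have hline : HasDerivAt (fun r : ℝ => x + r • e) e (0:ℝ) := by
    simpa using ((hasDerivAt_id (0:ℝ)).smul_const e).const_add x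
  have hx0 : x + (0:ℝ) • e = x := by simp
  have hcomp : HasDerivAt (fun t : ℝ => fderiv ℝ f (x + t • e)) (fderiv ℝ (fderiv ℝ f) x e) 0 := by
    have hF : HasFDerivAt (fderiv ℝ f) (fderiv ℝ (fderiv ℝ f) x) (x + (0:ℝ) • e) := by
      rw [hx0]; exact hdiff.hasFDerivAt
    exact hF.comp_hasDerivAt 0 hline
  have := hcomp.clm_apply (hasDerivAt_const 0 e)
  simpa using this

lemma laplacian_eq (f : EuclideanSpace ℝ (Fin n) → ℝ) (x : EuclideanSpace ℝ (Fin n)) :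
    laplacian f x = ∑ i : Fin n,
      fderiv ℝ (fderiv ℝ f) x (EuclideanSpace.single i 1) (EuclideanSpace.single i 1) := by
  unfold laplacian
  refine Finset.sum_congr rfl fun i _ => ?_
  rw [iteratedFDeriv_two_apply]
  simp

lemma second_deriv_nonneg_localMin {g dg : ℝ → ℝ} {c : ℝ}
    (h1 : ∀ᶠ t in 𝓝 (0:ℝ), HasDerivAt g (dg t) t)
    (h2 : HasDerivAt dg c 0) (hmin : IsLocalMin g 0) : 0 ≤ c := by
  by_contra hc
  push_neg at hc
  have hdg0 : dg 0 = 0 := hmin.hasDerivAt_eq_zero h1.self_of_nhds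
  have hslope : Tendsto (slope dg 0) (𝓝[≠] (0:ℝ)) (𝓝 c) :=
    hasDerivAt_iff_tendsto_slope.1 h2
  have hslope' : Tendsto (slope dg 0) (𝓝[<] (0:ℝ)) (𝓝 c) :=
    hslope.mono_left (nhdsWithin_mono _ (fun t ht => ne_of_lt ht))
  have hev : ∀ᶠ t in 𝓝[<] (0:ℝ), slope dg 0 t < 0 :=
    hslope'.eventually_lt_const hc
  have hpos : ∀ᶠ t in 𝓝[<] (0:ℝ), 0 < dg t := by
    filter_upwards [hev, self_mem_nhdsWithin] with t ht ht0
    rw [Set.mem_Iio] at ht0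
    have hts : slope dg 0 t = dg t / t := by
      simp [slope_def_field, hdg0]
    rw [hts] at ht
    rcases div_neg_iff.1 ht with ⟨h, h'⟩ | ⟨h, h'⟩
    · exact h
    · linarith
  have hall : ∀ᶠ t in 𝓝[<] (0:ℝ),
      0 < dg t ∧ HasDerivAt g (dg t) t ∧ g 0 ≤ g t := by
    filter_upwards [hpos, (h1.and hmin).filter_mono nhdsWithin_le_nhds] with t a b
    exact ⟨a, b.1, b.2⟩
  rcases mem_nhdsLT_iff_exists_Ioo_subset.1 hall with ⟨l, hl, hsub⟩
  set t0 : ℝ := l / 2 + 0/2 with ht0def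
  have hlt : l < t0 ∧ t0 < 0 := by
    constructor <;> · simp only [ht0def]; linarith [show l < 0 from hl]
  have ht0mem : t0 ∈ Ioo l 0 := ⟨hlt.1, hlt.2⟩
  have hmono : StrictMonoOn g (Icc t0 0) := by
    apply strictMonoOn_of_hasDerivWithinAt_pos (convex_Icc _ _) _ (f' := dg)
    · intro x hx
      rw [interior_Icc] at hx
      have hxm : x ∈ Ioo l 0 := ⟨lt_of_lt_of_le hlt.1 (le_of_lt hx.1), hx.2⟩
      exact ((hsub hxm).2.1).hasDerivWithinAt
    · intro x hx
      rw [interior_Icc] at hx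
      exact (hsub ⟨lt_of_lt_of_le hlt.1 (le_of_lt hx.1), hx.2⟩).1
    · intro x hx
      rcases eq_or_lt_of_le hx.2 with h | h
      · subst h
        exact h1.self_of_nhds.continuousAt.continuousWithinAt
      · exact ((hsub ⟨lt_of_lt_of_le hlt.1 hx.1, h⟩).2.1).continuousAt.continuousWithinAt
  have h3 : g t0 < g 0 := hmono ⟨le_refl _, le_of_lt hlt.2⟩ ⟨le_of_lt hlt.2, le_refl _⟩ hlt.2
  exact absurd (hsub ht0mem).2.2 (not_le.2 h3)

lemma left_deriv_nonpos {g : ℝ → ℝ} {d ε : ℝ} (hε : 0 < ε) (hg0 : g 0 = 0)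
    (hpos : ∀ t ∈ Ioo (-ε) (0:ℝ), 0 ≤ g t)
    (hd : HasDerivWithinAt g d (Iic 0) 0) : d ≤ 0 := by
  have hslope : Tendsto (slope g 0) (𝓝[Iic 0 \ {0}] (0:ℝ)) (𝓝 d) :=
    hasDerivWithinAt_iff_tendsto_slope.1 hd
  have hsub : 𝓝[<] (0:ℝ) ≤ 𝓝[Iic 0 \ {0}] (0:ℝ) := by
    apply nhdsWithin_mono
    intro t ht
    rw [Set.mem_Iio] at ht
    exact ⟨le_of_lt ht, by simp [ne_of_lt ht]⟩
  have hslope' : Tendsto (slope g 0) (𝓝[<] (0:ℝ)) (𝓝 d) := hslope.mono_left hsub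
  have hev : ∀ᶠ t in 𝓝[<] (0:ℝ), slope g 0 t ≤ 0 := by
    have hIoo : Ioo (-ε) (0:ℝ) ∈ 𝓝[<] (0:ℝ) := Ioo_mem_nhdsLT_of_mem (by constructor <;> linarith)
    filter_upwards [hIoo, self_mem_nhdsWithin] with t ht ht0
    rw [Set.mem_Iio] at ht0
    have hts : slope g 0 t = g t / t := by
      simp [slope_def_field, hg0]
    rw [hts]
    exact div_nonpos_of_nonneg_of_nonpos (hpos t ht) (le_of_lt ht0)
  have : (𝓝[<] (0:ℝ)).NeBot := nhdsLT_neBot 0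
  exact le_of_tendsto hslope' hev

lemma q_hasDerivAt (x e : EuclideanSpace ℝ (Fin n)) (t : ℝ) :
    HasDerivAt (fun r : ℝ => ∑ j, ((x + r • e) j)^2) (∑ j, 2*((x + t • e) j)*(e j)) t := by
  have h : ∀ j : Fin n, HasDerivAt (fun r : ℝ => ((x + r • e) j)^2) (2*((x + t • e) j)*(e j)) t := by
    intro j
    have hb : HasDerivAt (fun r : ℝ => (x + r • e) j) (e j) t := by
      simp only [PiLp.add_apply, PiLp.smul_apply, smul_eq_mul]
      simpa using ((hasDerivAt_id t).mul_const (e j)).const_add (x j)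
    simpa using hb.fun_pow 2
  simpa using HasDerivAt.fun_sum (fun j (_ : j ∈ Finset.univ) => h j)

lemma q_hasDerivAt2 (x e : EuclideanSpace ℝ (Fin n)) :
    HasDerivAt (fun t : ℝ => ∑ j, 2*((x + t • e) j)*(e j)) (∑ j, 2*(e j)^2) 0 := by
  have h' : ∀ j : Fin n, HasDerivAt (fun t : ℝ => 2*((x + t • e) j)*(e j)) (2*(e j)^2) 0 := by
    intro j
    have hb : HasDerivAt (fun r : ℝ => (x + r • e) j) (e j) 0 := by
      simp only [PiLp.add_apply, PiLp.smul_apply, smul_eq_mul]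
      simpa using ((hasDerivAt_id (0:ℝ)).mul_const (e j)).const_add (x j)
    have := (hb.const_mul 2).mul_const (e j)
    simpa [sq, mul_assoc] using this
  simpa using HasDerivAt.fun_sum (fun j (_ : j ∈ Finset.univ) => h' j)

lemma single_sq_sum (i : Fin n) :
    ∑ j, 2*((EuclideanSpace.single i (1:ℝ)) j)^2 = 2 := by
  simp [EuclideanSpace.single_apply]

lemma min_principle (hn : 1 ≤ n) {Ω : Set (EuclideanSpace ℝ (Fin n))}
    (hΩopen : IsOpen Ω) (hΩbdd : Bornology.IsBounded Ω)
    (k : ℕ) (hk : 2 ≤ k) (hkeven : Even k)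
    (u v : EuclideanSpace ℝ (Fin n) → ℝ)
    (hucont : ContinuousOn u (closure Ω)) (hvcont : ContinuousOn v (closure Ω))
    (hureg : ContDiffOn ℝ 2 u Ω) (hvreg : ContDiffOn ℝ 2 v Ω)
    (huharm : ∀ x ∈ Ω, laplacian u x = 0) (hvharm : ∀ x ∈ Ω, laplacian v x = 0)
    (hbd : ∀ x ∈ frontier Ω, v x = u x ^ k) :
    ∀ y ∈ Ω, u y ^ k ≤ v y := by
  intro y hy
  have hK : IsCompact (closure Ω) :=
    Metric.isCompact_of_isClosed_isBounded isClosed_closure hΩbdd.closure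
  have hqcont : Continuous (fun z : EuclideanSpace ℝ (Fin n) => ∑ j, (z j)^2) := by
    fun_prop
  have hne : (closure Ω).Nonempty := ⟨y, subset_closure hy⟩
  obtain ⟨z0, hz0K, hz0max⟩ := hK.exists_isMaxOn hne hqcont.continuousOn
  set R := ∑ j, (z0 j)^2 with hRdef
  have hRy : ∑ j, (y j)^2 ≤ R := isMaxOn_iff.1 hz0max y (subset_closure hy)
  have hqy : (0:ℝ) ≤ ∑ j, (y j)^2 := Finset.sum_nonneg fun j _ => sq_nonneg _
  have hR0 : 0 ≤ R := le_trans hqy hRy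
  have hudiff : ∀ z ∈ Ω, DifferentiableAt ℝ u z := fun z hz =>
    ((hureg.differentiableOn (by norm_num)) z hz).differentiableAt (hΩopen.mem_nhds hz)
  have hvdiff : ∀ z ∈ Ω, DifferentiableAt ℝ v z := fun z hz =>
    ((hvreg.differentiableOn (by norm_num)) z hz).differentiableAt (hΩopen.mem_nhds hz)
  have hkey : ∀ ε : ℝ, 0 < ε → u y ^ k ≤ v y + ε * R := by
    intro ε hε
    set W : EuclideanSpace ℝ (Fin n) → ℝ :=
      fun z => v z - u z ^ k - ε * ∑ j, (z j)^2 with hWdef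
    have hWcont : ContinuousOn W (closure Ω) :=
      (hvcont.sub (hucont.pow k)).sub ((continuous_const.mul hqcont).continuousOn)
    obtain ⟨x0, hx0K, hx0min⟩ := hK.exists_isMinOn hne hWcont
    have hx0notΩ : x0 ∉ Ω := by
      intro hx0Ω
      have key : ∀ i : Fin n, 0 ≤
          fderiv ℝ (fderiv ℝ v) x0 (EuclideanSpace.single i 1) (EuclideanSpace.single i 1)
          - ((k:ℝ) * (((k-1:ℕ):ℝ) * u x0 ^ (k-1-1) *
                fderiv ℝ u x0 (EuclideanSpace.single i 1)) *
                fderiv ℝ u x0 (EuclideanSpace.single i 1)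
              + (k:ℝ) * u x0 ^ (k-1) *
                fderiv ℝ (fderiv ℝ u) x0 (EuclideanSpace.single i 1) (EuclideanSpace.single i 1))
          - ε * (∑ j, 2*((EuclideanSpace.single i (1:ℝ)) j)^2) := by
        intro i
        set e : EuclideanSpace ℝ (Fin n) := EuclideanSpace.single i 1 with hedef
        have h0 : x0 + (0:ℝ) • e = x0 := by simp
        have hevΩ : ∀ᶠ t in 𝓝 (0:ℝ), x0 + t • e ∈ Ω := by
          have hc : Continuous (fun t : ℝ => x0 + t • e) := by fun_prop
          have := hc.continuousAt (x := (0:ℝ))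
          have hmem : Ω ∈ 𝓝 ((fun t : ℝ => x0 + t • e) 0) := by
            simpa [h0] using hΩopen.mem_nhds hx0Ω
          exact this.preimage_mem_nhds hmem
        have hder : ∀ᶠ t in 𝓝 (0:ℝ), HasDerivAt
            (fun t : ℝ => v (x0 + t • e) - u (x0 + t • e) ^ k - ε * ∑ j, ((x0 + t • e) j)^2)
            (fderiv ℝ v (x0 + t • e) e - (k:ℝ) * u (x0 + t • e) ^ (k-1) * fderiv ℝ u (x0 + t • e) e
              - ε * ∑ j, 2*((x0 + t • e) j)*(e j)) t := by
          filter_upwards [hevΩ] with t ht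
          have h1 := line_hasDerivAt (f := v) (hvdiff _ ht)
          have h2 := (line_hasDerivAt (f := u) (hudiff _ ht)).pow k
          have h3 := (q_hasDerivAt x0 e t).const_mul ε
          exact (h1.sub h2).sub h3
        have hmin : IsLocalMin
            (fun t : ℝ => v (x0 + t • e) - u (x0 + t • e) ^ k - ε * ∑ j, ((x0 + t • e) j)^2) 0 := by
          filter_upwards [hevΩ] with t ht
          have := isMinOn_iff.1 hx0min (x0 + t • e) (subset_closure ht)
          simpa [hWdef, h0] using this
        -- derivative of dg at 0
        have hu0 : DifferentiableAt ℝ u (x0 + (0:ℝ) • e) := by rw [h0]; exact hudiff _ hx0Ω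
        have ha := (line_hasDerivAt (f := u) hu0).fun_pow (k-1)
        have hb := line_hasDerivAt_clm hΩopen hureg hx0Ω e
        have hb' : HasDerivAt (fun t : ℝ => fderiv ℝ u (x0 + t • e) e)
            (fderiv ℝ (fderiv ℝ u) x0 e e) 0 := hb
        have hprod := (ha.const_mul (k:ℝ)).mul hb'
        have hv2 := line_hasDerivAt_clm hΩopen hvreg hx0Ω e
        have hq2 := (q_hasDerivAt2 x0 e).const_mul ε
        have hdg := (hv2.sub hprod).sub hq2
        have hge := second_deriv_nonneg_localMin hder hdg hmin
        convert hge using 1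
        rw [h0]
      have hsum := Finset.sum_nonneg (fun i (_ : i ∈ Finset.univ) => key i)
      have htotal : ∑ i : Fin n,
          (fderiv ℝ (fderiv ℝ v) x0 (EuclideanSpace.single i 1) (EuclideanSpace.single i 1)
          - ((k:ℝ) * (((k-1:ℕ):ℝ) * u x0 ^ (k-1-1) *
                fderiv ℝ u x0 (EuclideanSpace.single i 1)) *
                fderiv ℝ u x0 (EuclideanSpace.single i 1)
              + (k:ℝ) * u x0 ^ (k-1) *
                fderiv ℝ (fderiv ℝ u) x0 (EuclideanSpace.single i 1) (EuclideanSpace.single i 1))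
          - ε * (∑ j, 2*((EuclideanSpace.single i (1:ℝ)) j)^2))
        = laplacian v x0
          - (((k:ℝ) * (((k-1:ℕ):ℝ) * u x0 ^ (k-1-1))) *
               ∑ i : Fin n, (fderiv ℝ u x0 (EuclideanSpace.single i 1))^2
             + ((k:ℝ) * u x0 ^ (k-1)) * laplacian u x0)
          - (n:ℝ) * (ε * 2) := by
        rw [laplacian_eq u, laplacian_eq v]
        rw [Finset.mul_sum, Finset.mul_sum, ← Finset.sum_add_distrib, ← Finset.sum_sub_distrib]
        have hn' : (n:ℝ)*(ε*2) = ∑ _i : Fin n, ε*2 := by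
          simp [Finset.sum_const, Finset.card_univ, mul_comm]
        rw [hn', ← Finset.sum_sub_distrib]
        refine Finset.sum_congr rfl fun i _ => ?_
        rw [single_sq_sum]
        ring
      rw [htotal, huharm x0 hx0Ω, hvharm x0 hx0Ω] at hsum
      have hS : (0:ℝ) ≤ ∑ i : Fin n, (fderiv ℝ u x0 (EuclideanSpace.single i 1))^2 :=
        Finset.sum_nonneg fun i _ => sq_nonneg _
      have hpow : (0:ℝ) ≤ u x0 ^ (k-1-1) := by
        have heven : Even (k-1-1) := by
          have h2 : k - 1 - 1 = k - 2 := by omega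
          rw [h2]
          exact hkeven.tsub even_two
        exact heven.pow_nonneg _
      have hC1S : (0:ℝ) ≤ ((k:ℝ) * (((k-1:ℕ):ℝ) * u x0 ^ (k-1-1))) *
          ∑ i : Fin n, (fderiv ℝ u x0 (EuclideanSpace.single i 1))^2 :=
        mul_nonneg (mul_nonneg (Nat.cast_nonneg k)
          (mul_nonneg (Nat.cast_nonneg _) hpow)) hS
      have hn1 : (1:ℝ) ≤ (n:ℝ) := by exact_mod_cast hn
      have hfin : (1:ℝ) * (ε*2) ≤ (n:ℝ) * (ε*2) :=
        mul_le_mul_of_nonneg_right hn1 (by linarith)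
      linarith
    have hx0front : x0 ∈ frontier Ω := by
      rw [hΩopen.frontier_eq]
      exact ⟨hx0K, hx0notΩ⟩
    have hq0le : ∑ j, (x0 j)^2 ≤ R := isMaxOn_iff.1 hz0max x0 hx0K
    have hq0pos : (0:ℝ) ≤ ∑ j, (x0 j)^2 := Finset.sum_nonneg fun j _ => sq_nonneg _
    have h1 : W x0 ≤ W y := isMinOn_iff.1 hx0min y (subset_closure hy)
    have hWx0 : W x0 = - (ε * ∑ j, (x0 j)^2) := by
      simp only [hWdef]
      rw [hbd x0 hx0front]
      ring
    have hWy : W y = v y - u y ^ k - ε * ∑ j, (y j)^2 := rfl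
    rw [hWx0, hWy] at h1
    have hεq0 : ε * ∑ j, (x0 j)^2 ≤ ε * R := mul_le_mul_of_nonneg_left hq0le (le_of_lt hε)
    have hεqy : (0:ℝ) ≤ ε * ∑ j, (y j)^2 := mul_nonneg (le_of_lt hε) hqy
    linarith
  by_contra hlt
  push_neg at hlt
  have hd : 0 < u y ^ k - v y := by linarith
  have hk2 := hkey ((u y ^ k - v y)/(R+1)) (by positivity)
  have hRR : (u y ^ k - v y)/(R+1) * R < u y ^ k - v y := by
    rw [div_mul_eq_mul_div, div_lt_iff₀ (by linarith)]
    nlinarith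
  linarith

end helpers

/-- Let `Ω ⊆ ℝⁿ` be a bounded domain with `C²` boundary (encoded through its
exterior unit normal `ν` and the interior-ball condition), and let `𝒟` denote the
Dirichlet–Neumann operator of `Ω`: for a smooth boundary datum `g`, `𝒟g = ∂w/∂ν` on `∂Ω`,
where `w` is the harmonic extension of `g` to `Ω` (harmonic in `Ω`, continuous up to `∂Ω`,
equal to `g` on `∂Ω`) and `ν` is the exterior unit normal.  Here `u` is the harmonic extension
of `f` with exterior normal derivative `Du = 𝒟f`, and `v` is the harmonic extension of
`f^{2m}` with exterior normal derivative `Dv = 𝒟(f^{2m})`.  Then for every integer `m ≥ 1`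
the pointwise inequality `(1/(2m)) 𝒟(f^{2m})(x) ≤ f(x)^{2m−1} · 𝒟f(x)` holds on `∂Ω`. -/
theorem stmt_1 {n : ℕ} (Ω : Set (EuclideanSpace ℝ (Fin n)))
    (hΩopen : IsOpen Ω) (hΩbdd : Bornology.IsBounded Ω)
    (ν : EuclideanSpace ℝ (Fin n) → EuclideanSpace ℝ (Fin n))
    (hν_unit : ∀ x ∈ frontier Ω, ‖ν x‖ = 1)
    (hν_ext : ∀ x ∈ frontier Ω, ∃ ε > (0:ℝ), ∀ t ∈ Set.Ioo (0:ℝ) ε,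
        x + t • ν x ∉ closure Ω ∧ x - t • ν x ∈ Ω)
    (hball : ∀ x ∈ frontier Ω, ∃ r > (0:ℝ), Metric.ball (x - r • ν x) r ⊆ Ω)
    (m : ℕ) (hm : 1 ≤ m)
    (f u v : EuclideanSpace ℝ (Fin n) → ℝ)
    (hf : ContinuousOn f (frontier Ω))
    (hucont : ContinuousOn u (closure Ω)) (hvcont : ContinuousOn v (closure Ω))
    (hureg : ContDiffOn ℝ 2 u Ω) (hvreg : ContDiffOn ℝ 2 v Ω)
    (huharm : ∀ x ∈ Ω, laplacian u x = 0) (hvharm : ∀ x ∈ Ω, laplacian v x = 0)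
    (hubd : ∀ x ∈ frontier Ω, u x = f x)
    (hvbd : ∀ x ∈ frontier Ω, v x = f x ^ (2 * m))
    (Du Dv : EuclideanSpace ℝ (Fin n) → ℝ)
    (hDu : ∀ x ∈ frontier Ω,
        HasDerivWithinAt (fun t : ℝ => u (x + t • ν x)) (Du x) (Set.Iic 0) 0)
    (hDv : ∀ x ∈ frontier Ω,
        HasDerivWithinAt (fun t : ℝ => v (x + t • ν x)) (Dv x) (Set.Iic 0) 0) :
    ∀ x ∈ frontier Ω, (1 / (2 * (m : ℝ))) * Dv x ≤ f x ^ (2 * m - 1) * Du x := by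
  intro x hx
  obtain ⟨ε, hε, hprop⟩ := hν_ext x hx
  have hn : 1 ≤ n := by
    by_contra hn0
    push_neg at hn0
    have hn0' : n = 0 := by omega
    have hallq : ∀ a b : EuclideanSpace ℝ (Fin n), a = b := by
      subst hn0'
      intro a b
      ext j
      exact Fin.elim0 j
    obtain ⟨hout, hin⟩ := hprop (ε/2) ⟨by linarith, by linarith⟩
    apply hout
    rw [hallq (x + (ε/2) • ν x) (x - (ε/2) • ν x)]
    exact subset_closure hin
  set k := 2*m with hkdef
  have hk2 : 2 ≤ k := by omega
  have hkeven : Even k := ⟨m, by omega⟩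
  have hbd' : ∀ z ∈ frontier Ω, v z = u z ^ k := fun z hz => by
    rw [hvbd z hz, hubd z hz]
  have hler : ∀ z ∈ Ω, u z ^ k ≤ v z :=
    min_principle hn hΩopen hΩbdd k hk2 hkeven u v hucont hvcont hureg hvreg huharm hvharm hbd'
  have hgd0 := (hDv x hx).sub ((hDu x hx).fun_pow k)
  have hgd : HasDerivWithinAt (fun t : ℝ => v (x + t • ν x) - u (x + t • ν x) ^ k)
      (Dv x - (k:ℝ) * f x ^ (k-1) * Du x) (Set.Iic 0) 0 := by
    rw [show Dv x - (k:ℝ) * f x ^ (k-1) * Du x = Dv x - (k:ℝ) * u (x + (0:ℝ) • ν x) ^ (k-1) * Du x by simp [hubd x hx]]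
    exact hgd0
  have hg0 : (fun t : ℝ => v (x + t • ν x) - u (x + t • ν x) ^ k) 0 = 0 := by
    simp only []
    rw [show x + (0:ℝ) • ν x = x by simp, hvbd x hx, hubd x hx]
    exact sub_self _
  have hgpos : ∀ t ∈ Set.Ioo (-ε) (0:ℝ),
      0 ≤ (fun t : ℝ => v (x + t • ν x) - u (x + t • ν x) ^ k) t := by
    intro t ht
    have hmem : x + t • ν x ∈ Ω := by
      have h2 := (hprop (-t) ⟨by linarith [ht.2], by linarith [ht.1]⟩).2
      simpa [sub_eq_add_neg, neg_smul] using h2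
    simpa using sub_nonneg.2 (hler _ hmem)
  have hd := left_deriv_nonpos hε hg0 hgpos hgd
  have hm1 : (1:ℝ) ≤ (m:ℝ) := by exact_mod_cast hm
  have hm' : (0:ℝ) < 2*(m:ℝ) := by linarith
  have hkc : ((k:ℕ):ℝ) = 2*(m:ℝ) := by rw [hkdef]; push_cast; ring
  rw [hkc] at hd
  rw [one_div, inv_mul_le_iff₀ hm']
  ring_nf
  ring_nf at hd
  linarith
end

section
/- Let 0 < α < 2 and let Λ^α = (−Δ)^{α/2} on ℝⁿ, given for Schwartz functions θ by Λ^α θ(x) = c_{n,α} ∫_{ℝⁿ} (θ(x) − θ(y))/|x − y|^{n+α} dy with c_{n,α} > 0 (the integral taken in the principal-value sense). Then for every convex function φ ∈ C¹(ℝ) and every f in the Schwartz class 𝒮(ℝⁿ), the pointwise inequality Λ^α(φ(f))(x) ≤ φ′(f(x)) · Λ^α f(x) holds for all x ∈ ℝⁿ (whenever Λ^α(φ(f)) is defined, e.g. φ(0)=0 or the integral converges). -/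
open MeasureTheory

/-- Let `0 < α < 2` and let `Λ^α = (−Δ)^{α/2}` on `ℝⁿ`, given for Schwartz
functions `θ` by the principal-value singular integral
`Λ^α θ(x) = c_{n,α} p.v.∫ (θ(x) − θ(y)) |x−y|^{−n−α} dy` with a constant `c_{n,α} > 0`.
The hypotheses `hLf`, `hLφf` say that the principal values defining `Λ^α f(x)` and
`Λ^α(φ∘f)(x)` exist, with `Λ^α f(x) = c·Lf` and `Λ^α(φ∘f)(x) = c·Lφf`.  Then for every
convex `φ ∈ C¹(ℝ)` and every Schwartz `f`, the pointwise inequality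
`Λ^α(φ(f))(x) ≤ φ′(f(x))·Λ^α f(x)` holds. -/
theorem stmt_2 {n : ℕ} (α : ℝ) (hα : 0 < α) (hα2 : α < 2) (c : ℝ) (hc : 0 < c)
    (φ : ℝ → ℝ) (hφconv : ConvexOn ℝ Set.univ φ) (hφC1 : ContDiff ℝ 1 φ)
    (f : SchwartzMap (EuclideanSpace ℝ (Fin n)) ℝ) (x : EuclideanSpace ℝ (Fin n))
    (Lf Lφf : ℝ)
    (hLf : Filter.Tendsto
        (fun ε : ℝ => ∫ y in {y : EuclideanSpace ℝ (Fin n) | ε ≤ ‖x - y‖},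
          (f x - f y) / ‖x - y‖ ^ ((n : ℝ) + α))
        (nhdsWithin 0 (Set.Ioi 0)) (nhds Lf))
    (hLφf : Filter.Tendsto
        (fun ε : ℝ => ∫ y in {y : EuclideanSpace ℝ (Fin n) | ε ≤ ‖x - y‖},
          (φ (f x) - φ (f y)) / ‖x - y‖ ^ ((n : ℝ) + α))
        (nhdsWithin 0 (Set.Ioi 0)) (nhds Lφf)) :
    c * Lφf ≤ deriv φ (f x) * (c * Lf) := by
  have hφd : Differentiable ℝ φ := hφC1.differentiable one_ne_zero
  set r : ℝ := (n : ℝ) + α with hrdef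
  have hrpos : 0 < r := by positivity
  -- tangent line inequality
  have tangent : ∀ a b : ℝ, φ a - φ b ≤ deriv φ a * (a - b) := by
    intro a b
    rcases lt_trichotomy a b with h | h | h
    · have := hφconv.deriv_le_slope (Set.mem_univ a) (Set.mem_univ b) h (hφd a)
      rw [slope_def_field, le_div_iff₀ (by linarith : (0:ℝ) < b - a)] at this
      nlinarith
    · simp [h]
    · have := hφconv.slope_le_deriv (Set.mem_univ b) (Set.mem_univ a) h (hφd a)
      rw [slope_def_field, div_le_iff₀ (by linarith : (0:ℝ) < a - b)] at this
      linarith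
  -- boundedness of f
  obtain ⟨Cf, hCf⟩ : ∃ C, ∀ y, |f y| ≤ C := by
    obtain ⟨C, hC⟩ := f.decay 0 0
    refine ⟨C, fun y => ?_⟩
    have := hC.2 y
    simpa [norm_iteratedFDeriv_zero, Real.norm_eq_abs] using this
  have hCf0 : 0 ≤ Cf := le_trans (abs_nonneg _) (hCf x)
  -- boundedness of φ on the range
  obtain ⟨Cφ, hCφ⟩ : ∃ C, ∀ t ∈ Set.Icc (-Cf) Cf, |φ t| ≤ C :=
    isCompact_Icc.exists_bound_of_continuousOn hφC1.continuous.continuousOn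
  -- kernel integrability
  have hker : ∀ ε : ℝ, 0 < ε →
      IntegrableOn (fun y : EuclideanSpace ℝ (Fin n) => ‖x - y‖ ^ (-r))
        {y | ε ≤ ‖x - y‖} volume := by
    intro ε hε
    have hnr : (Module.finrank ℝ (EuclideanSpace ℝ (Fin n)) : ℝ) < r := by
      simp [finrank_euclideanSpace, hrdef]; linarith
    have hint : Integrable (fun z : EuclideanSpace ℝ (Fin n) => (1 + ‖z‖) ^ (-r)) volume :=
      integrable_one_add_norm hnr
    have hint2 : Integrable
        (fun y : EuclideanSpace ℝ (Fin n) => (1 + ε⁻¹) ^ r * (1 + ‖x - y‖) ^ (-r)) volume :=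
      ((hint.comp_sub_left x).const_mul _)
    refine Integrable.mono' hint2.integrableOn ?_ ?_
    · apply Measurable.aestronglyMeasurable
      fun_prop
    · filter_upwards [ae_restrict_mem (by
        exact measurableSet_le measurable_const (by fun_prop))] with y hy
      have hy' : ε ≤ ‖x - y‖ := hy
      have hpos : 0 < ‖x - y‖ := lt_of_lt_of_le hε hy'
      have h1 : 1 + ‖x - y‖ ≤ (1 + ε⁻¹) * ‖x - y‖ := by
        have h0 : 1 ≤ ε⁻¹ * ‖x - y‖ := by
          have := mul_le_mul_of_nonneg_left hy' (inv_nonneg.mpr hε.le)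
          rwa [inv_mul_cancel₀ hε.ne'] at this
        nlinarith [hpos.le]
      have h2 : (1 + ‖x - y‖) ^ (-r) ≥ ((1 + ε⁻¹) * ‖x - y‖) ^ (-r) := by
        apply Real.rpow_le_rpow_of_nonpos (by positivity) h1 (by linarith)
      rw [Real.norm_of_nonneg (Real.rpow_nonneg hpos.le _)]
      calc ‖x - y‖ ^ (-r) = (1 + ε⁻¹) ^ r * ((1 + ε⁻¹) * ‖x - y‖) ^ (-r) := by
            rw [Real.mul_rpow (by positivity) hpos.le, ← mul_assoc,
              ← Real.rpow_add (by positivity), add_neg_cancel, Real.rpow_zero, one_mul]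
        _ ≤ (1 + ε⁻¹) ^ r * (1 + ‖x - y‖) ^ (-r) := by
            have : (0:ℝ) ≤ (1 + ε⁻¹) ^ r := by positivity
            nlinarith [h2]
  -- measurability of the truncation sets
  have hSmeas : ∀ ε : ℝ, MeasurableSet {y : EuclideanSpace ℝ (Fin n) | ε ≤ ‖x - y‖} := fun ε =>
    measurableSet_le measurable_const (by fun_prop)
  -- integrability of the `f`-integrand
  have hIf : ∀ ε : ℝ, 0 < ε → IntegrableOn
      (fun y => (f x - f y) / ‖x - y‖ ^ r) {y | ε ≤ ‖x - y‖} volume := by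
    intro ε hε
    refine Integrable.mono' ((hker ε hε).const_mul (|f x| + Cf)) ?_ ?_
    · apply Measurable.aestronglyMeasurable
      fun_prop
    · filter_upwards [ae_restrict_mem (hSmeas ε)] with y hy
      have hpos : 0 < ‖x - y‖ := lt_of_lt_of_le hε hy
      rw [Real.norm_eq_abs, abs_div, abs_of_nonneg (Real.rpow_nonneg hpos.le r),
        div_eq_mul_inv, ← Real.rpow_neg hpos.le]
      refine mul_le_mul_of_nonneg_right ?_ (Real.rpow_nonneg hpos.le _)
      calc |f x - f y| ≤ |f x| + |f y| := abs_sub _ _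
        _ ≤ |f x| + Cf := by linarith [hCf y]
  -- integrability of the `φ ∘ f`-integrand
  have hIφ : ∀ ε : ℝ, 0 < ε → IntegrableOn
      (fun y => (φ (f x) - φ (f y)) / ‖x - y‖ ^ r) {y | ε ≤ ‖x - y‖} volume := by
    intro ε hε
    refine Integrable.mono' ((hker ε hε).const_mul (|φ (f x)| + Cφ)) ?_ ?_
    · apply Measurable.aestronglyMeasurable
      have : Continuous φ := hφC1.continuous
      fun_prop
    · filter_upwards [ae_restrict_mem (hSmeas ε)] with y hy
      have hpos : 0 < ‖x - y‖ := lt_of_lt_of_le hε hy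
      rw [Real.norm_eq_abs, abs_div, abs_of_nonneg (Real.rpow_nonneg hpos.le r),
        div_eq_mul_inv, ← Real.rpow_neg hpos.le]
      refine mul_le_mul_of_nonneg_right ?_ (Real.rpow_nonneg hpos.le _)
      have hmem : f y ∈ Set.Icc (-Cf) Cf := abs_le.mp (hCf y)
      calc |φ (f x) - φ (f y)| ≤ |φ (f x)| + |φ (f y)| := abs_sub _ _
        _ ≤ |φ (f x)| + Cφ := by linarith [hCφ (f y) hmem]
  -- pointwise inequality of the integrands
  have hpt : ∀ y : EuclideanSpace ℝ (Fin n),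
      (φ (f x) - φ (f y)) / ‖x - y‖ ^ r ≤ deriv φ (f x) * ((f x - f y) / ‖x - y‖ ^ r) := by
    intro y
    rw [mul_div_assoc']
    rcases eq_or_lt_of_le (norm_nonneg (x - y)) with h0 | h0
    · rw [← h0, Real.zero_rpow hrpos.ne', div_zero, div_zero]
    · have hk : 0 < ‖x - y‖ ^ r := Real.rpow_pos_of_pos h0 r
      gcongr
      exact tangent (f x) (f y)
  -- inequality between the truncated integrals
  have key : ∀ ε ∈ Set.Ioi (0 : ℝ),
      (∫ y in {y : EuclideanSpace ℝ (Fin n) | ε ≤ ‖x - y‖},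
        (φ (f x) - φ (f y)) / ‖x - y‖ ^ r)
      ≤ deriv φ (f x) * ∫ y in {y : EuclideanSpace ℝ (Fin n) | ε ≤ ‖x - y‖},
        (f x - f y) / ‖x - y‖ ^ r := by
    intro ε hε
    rw [← MeasureTheory.integral_const_mul]
    exact setIntegral_mono_on (hIφ ε hε) ((hIf ε hε).const_mul _) (hSmeas ε)
      fun y _ => hpt y
  have hmain : Lφf ≤ deriv φ (f x) * Lf := by
    refine le_of_tendsto_of_tendsto hLφf (hLf.const_mul _) ?_
    filter_upwards [self_mem_nhdsWithin] with ε hε using key ε hε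
  calc c * Lφf ≤ c * (deriv φ (f x) * Lf) := mul_le_mul_of_nonneg_left hmain hc.le
    _ = deriv φ (f x) * (c * Lf) := by ring
end

section
/- Let Ω ⊆ ℝⁿ be a bounded domain with C² boundary, f smooth on ∂Ω, m ≥ 1 an integer, and let u, v be the harmonic extensions of f and f^{2m} to Ω. Then at every boundary point x ∈ ∂Ω the exterior normal derivative of w = u^{2m} − v is nonnegative: ∂w/∂ν(x) ≥ 0, i.e. ∂v/∂ν(x) ≤ 2m f(x)^{2m−1} ∂u/∂ν(x); in other words 𝒟(f^{2m})(x) ≤ 2m f(x)^{2m−1} 𝒟f(x), where 𝒟 is the Dirichlet–Neumann operator of Ω. -/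
open MeasureTheory

open Set Filter Topology

section Aux

lemma aux_hasDerivAt_deriv {g : ℝ → ℝ} {x : ℝ} (hg : ContDiffAt ℝ 2 g x) :
    HasDerivAt (deriv g) (deriv (deriv g) x) x := by
  obtain ⟨ε, hε, hball⟩ := Metric.eventually_nhds_iff.mp (hg.eventually (by norm_num))
  have hop : IsOpen (Metric.ball x ε) := Metric.isOpen_ball
  have hcd : ContDiffOn ℝ 2 g (Metric.ball x ε) := fun y hy =>
    (hball (by simpa [Metric.mem_ball] using hy)).contDiffWithinAt
  have h1 : ContDiffOn ℝ 1 (deriv g) (Metric.ball x ε) :=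
    hcd.deriv_of_isOpen hop (by norm_num)
  have hx : Metric.ball x ε ∈ 𝓝 x := hop.mem_nhds (Metric.mem_ball_self hε)
  exact ((h1.contDiffAt hx).differentiableAt one_ne_zero).hasDerivAt

/-- Second derivative test: at an interior local max of a C² function the second
derivative is nonpositive. -/
lemma aux_second_deriv_test {ψ : ℝ → ℝ} (hψ : ContDiffAt ℝ 2 ψ 0) (hmax : IsLocalMax ψ 0) :
    deriv (deriv ψ) 0 ≤ 0 := by
  by_contra hpos
  push_neg at hpos
  obtain ⟨δ, hδ, hprop⟩ := Metric.eventually_nhds_iff.mp ((hψ.eventually (by norm_num)).and hmax)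
  have hdiff : ∀ t : ℝ, |t| < δ → HasDerivAt ψ (deriv ψ t) t := fun t ht =>
    (((hprop (by simpa [Real.dist_eq] using ht)).1).differentiableAt two_ne_zero).hasDerivAt
  have hψ'0 : deriv ψ 0 = 0 := hmax.deriv_eq_zero
  have hd2 : HasDerivAt (deriv ψ) (deriv (deriv ψ) 0) 0 := aux_hasDerivAt_deriv hψ
  have hslope : Tendsto (slope (deriv ψ) 0) (𝓝[≠] (0:ℝ)) (𝓝 (deriv (deriv ψ) 0)) :=
    hasDerivAt_iff_tendsto_slope.mp hd2
  have hev : ∀ᶠ t in 𝓝[>] (0:ℝ), 0 < deriv ψ t := by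
    have h1 : ∀ᶠ t in 𝓝[≠] (0:ℝ), 0 < slope (deriv ψ) 0 t :=
      hslope.eventually (eventually_gt_nhds hpos)
    have h2 : ∀ᶠ t in 𝓝[>] (0:ℝ), 0 < slope (deriv ψ) 0 t :=
      h1.filter_mono (nhdsWithin_mono _ (fun t ht => ne_of_gt ht))
    filter_upwards [h2, self_mem_nhdsWithin] with t ht ht'
    have : slope (deriv ψ) 0 t = deriv ψ t / t := by
      simp [slope_def_field, hψ'0]
    rw [this] at ht
    rcases div_pos_iff.mp ht with ⟨h, _⟩ | ⟨_, h⟩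
    · exact h
    · exact absurd ht' (not_lt.mpr h.le)
  have hev2 : ∀ᶠ t in 𝓝[>] (0:ℝ), 0 < deriv ψ t ∧ ψ t ≤ ψ 0 ∧ |t| < δ := by
    have hmem : Ioo (0:ℝ) δ ∈ 𝓝[>] (0:ℝ) := Ioo_mem_nhdsGT_of_mem ⟨le_rfl, hδ⟩
    filter_upwards [hev, hmem] with t h1 h2
    refine ⟨h1, (hprop (y := t) (by simp [Real.dist_eq, abs_of_pos h2.1]; linarith [h2.2])).2,
      by rw [abs_of_pos h2.1]; exact h2.2⟩
  obtain ⟨b, hb0, hIoo⟩ := mem_nhdsGT_iff_exists_Ioo_subset.mp hev2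
  have hb0' : (0:ℝ) < b := hb0
  have hmem2 : b/2 ∈ Ioo (0:ℝ) b := ⟨by linarith, by linarith⟩
  have hIccδ : ∀ t ∈ Icc (0:ℝ) (b/2), |t| < δ := by
    intro t ht
    rcases eq_or_lt_of_le ht.1 with h | h
    · simpa [← h] using hδ
    · exact (hIoo ⟨h, lt_of_le_of_lt ht.2 (by linarith)⟩).2.2
  have hcont : ContinuousOn ψ (Icc (0:ℝ) (b/2)) := fun t ht =>
    ((hdiff t (hIccδ t ht)).differentiableAt.continuousAt).continuousWithinAt
  have hmono : StrictMonoOn ψ (Icc (0:ℝ) (b/2)) := by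
    apply strictMonoOn_of_deriv_pos (convex_Icc _ _) hcont
    intro t ht
    rw [interior_Icc] at ht
    exact (hIoo ⟨ht.1, lt_trans ht.2 (by linarith)⟩).1
  have hlt : ψ 0 < ψ (b/2) :=
    hmono ⟨le_rfl, by linarith⟩ ⟨by linarith, le_rfl⟩ (by linarith)
  exact absurd (hIoo hmem2).2.1 (not_le.mpr hlt)

lemma aux_line_hasDerivAt {n : ℕ} (z e : EuclideanSpace ℝ (Fin n)) (t : ℝ) :
    HasDerivAt (fun s : ℝ => z + s • e) e t := by
  simpa using ((hasDerivAt_id t).smul_const e).const_add z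

/-- Second derivative of φ along a line equals the iterated Fréchet derivative. -/
lemma aux_line_d2 {n : ℕ} {Ω : Set (EuclideanSpace ℝ (Fin n))} (hΩ : IsOpen Ω)
    {φ : EuclideanSpace ℝ (Fin n) → ℝ} (hφ : ContDiffOn ℝ 2 φ Ω)
    {z : EuclideanSpace ℝ (Fin n)} (hz : z ∈ Ω) (e : EuclideanSpace ℝ (Fin n)) :
    deriv (deriv (fun t : ℝ => φ (z + t • e))) 0 = iteratedFDeriv ℝ 2 φ z ![e, e] := by
  have h0 : z + (0:ℝ) • e = z := by simp
  have hcont : Continuous (fun t : ℝ => z + t • e) :=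
    continuous_const.add (continuous_id.smul continuous_const)
  have hmem : ∀ᶠ t in 𝓝 (0:ℝ), z + t • e ∈ Ω := by
    have := hcont.continuousAt (x := (0:ℝ)).preimage_mem_nhds
      (hΩ.mem_nhds (show z + (0:ℝ) • e ∈ Ω by rwa [h0]))
    exact this
  have hderiv_eq : deriv (fun t : ℝ => φ (z + t • e)) =ᶠ[𝓝 (0:ℝ)]
      fun t => fderiv ℝ φ (z + t • e) e := by
    filter_upwards [hmem] with t ht
    have hd : DifferentiableAt ℝ φ (z + t • e) :=
      (hφ.contDiffAt (hΩ.mem_nhds ht)).differentiableAt two_ne_zero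
    exact (hd.hasFDerivAt.comp_hasDerivAt t (aux_line_hasDerivAt z e t)).deriv
  rw [hderiv_eq.deriv_eq]
  have hB : DifferentiableAt ℝ (fderiv ℝ φ) z :=
    ((hφ.contDiffAt (hΩ.mem_nhds hz)).fderiv_right (m := 1) (by norm_num)).differentiableAt one_ne_zero
  have hB' : HasFDerivAt (fderiv ℝ φ) (fderiv ℝ (fderiv ℝ φ) z) (z + (0:ℝ) • e) := by
    rw [h0]; exact hB.hasFDerivAt
  have hC : HasDerivAt (fun t : ℝ => fderiv ℝ φ (z + t • e)) (fderiv ℝ (fderiv ℝ φ) z e) 0 := by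
    have := hB'.comp_hasDerivAt 0 (aux_line_hasDerivAt z e 0)
    exact this
  have hD : HasDerivAt (fun t : ℝ => fderiv ℝ φ (z + t • e) e)
      (fderiv ℝ (fderiv ℝ φ) z e e) 0 := by
    have := hC.clm_apply (hasDerivAt_const (0:ℝ) e)
    simpa using this
  rw [hD.deriv, iteratedFDeriv_two_apply]
  simp

lemma aux_contDiffAt_line {n : ℕ} {Ω : Set (EuclideanSpace ℝ (Fin n))} (hΩ : IsOpen Ω)
    {w : EuclideanSpace ℝ (Fin n) → ℝ} (hreg : ContDiffOn ℝ 2 w Ω)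
    {z : EuclideanSpace ℝ (Fin n)} (hz : z ∈ Ω) (e : EuclideanSpace ℝ (Fin n)) :
    ContDiffAt ℝ 2 (fun t : ℝ => w (z + t • e)) 0 := by
  have h0 : z + (0:ℝ) • e = z := by simp
  have haff : ContDiffAt ℝ 2 (fun t : ℝ => z + t • e) 0 :=
    (contDiff_const.add (contDiff_id.smul contDiff_const)).contDiffAt
  exact ContDiffAt.comp 0 (hreg.contDiffAt (hΩ.mem_nhds (by rwa [← h0] at hz))) haff

/-- Second derivative of `g^p - h` at `0`. -/
lemma aux_d2_pow_sub {g h : ℝ → ℝ} (hg : ContDiffAt ℝ 2 g 0) (hh : ContDiffAt ℝ 2 h 0) (p : ℕ) :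
    deriv (deriv (fun t => g t ^ p - h t)) 0
      = (p:ℝ) * ((p-1 : ℕ):ℝ) * g 0 ^ (p-2) * (deriv g 0)^2
        + (p:ℝ) * g 0 ^ (p-1) * deriv (deriv g) 0 - deriv (deriv h) 0 := by
  have hev : deriv (fun t => g t ^ p - h t) =ᶠ[𝓝 (0:ℝ)]
      fun t => (p:ℝ) * g t ^ (p-1) * deriv g t - deriv h t := by
    filter_upwards [hg.eventually (by norm_num), hh.eventually (by norm_num)] with t hgt hht
    exact (((hgt.differentiableAt two_ne_zero).hasDerivAt.pow p).sub
      (hht.differentiableAt two_ne_zero).hasDerivAt).deriv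
  rw [hev.deriv_eq]
  have h1 : HasDerivAt (fun t => g t ^ (p-1))
      (((p-1 : ℕ):ℝ) * g 0 ^ (p-1-1) * deriv g 0) 0 :=
    (hg.differentiableAt two_ne_zero).hasDerivAt.pow (p-1)
  have h2 : HasDerivAt (fun t => (p:ℝ) * g t ^ (p-1) * deriv g t)
      ((p:ℝ) * ((((p-1:ℕ):ℝ) * g 0 ^ (p-1-1) * deriv g 0) * deriv g 0
        + g 0 ^ (p-1) * deriv (deriv g) 0)) 0 := by
    have := (h1.mul (aux_hasDerivAt_deriv hg)).const_mul (p:ℝ)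
    simpa [mul_assoc, mul_comm, mul_left_comm] using this
  rw [HasDerivAt.deriv (f := fun t => (p:ℝ) * g t ^ (p-1) * deriv g t - deriv h t)
    (h2.sub (aux_hasDerivAt_deriv hh))]
  have : p - 1 - 1 = p - 2 := by omega
  rw [this]; ring

/-- Weak maximum principle for functions with nonnegative "line Laplacian". -/
lemma aux_max_principle {n : ℕ} (hn : 0 < n) {Ω : Set (EuclideanSpace ℝ (Fin n))}
    (hΩopen : IsOpen Ω) (hΩbdd : Bornology.IsBounded Ω)
    {w : EuclideanSpace ℝ (Fin n) → ℝ}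
    (hcont : ContinuousOn w (closure Ω)) (hreg : ContDiffOn ℝ 2 w Ω)
    (hsub : ∀ z ∈ Ω, 0 ≤ ∑ i : Fin n,
      deriv (deriv (fun t : ℝ => w (z + t • (EuclideanSpace.single i 1)))) 0)
    (hbd : ∀ x ∈ frontier Ω, w x ≤ 0) :
    ∀ y ∈ closure Ω, w y ≤ 0 := by
  intro y hy
  obtain ⟨R, hR⟩ := hΩbdd.closure.subset_closedBall 0
  have hRy : ‖y‖ ≤ R := by simpa [Metric.mem_closedBall] using hR hy
  have hR0 : 0 ≤ R := le_trans (norm_nonneg y) hRy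
  have key : ∀ ε : ℝ, 0 < ε → w y + ε * ‖y‖^2 ≤ ε * R^2 := by
    intro ε hε
    set F : EuclideanSpace ℝ (Fin n) → ℝ := fun x => w x + ε * ‖x‖^2 with hF
    have hFcont : ContinuousOn F (closure Ω) :=
      hcont.add ((continuous_const.mul ((continuous_norm).pow 2)).continuousOn)
    have hcomp : IsCompact (closure Ω) :=
      Metric.isCompact_of_isClosed_isBounded isClosed_closure hΩbdd.closure
    obtain ⟨z, hzcl, hzmax⟩ := hcomp.exists_isMaxOn ⟨y, hy⟩ hFcont
    have hznotin : z ∉ Ω := by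
      intro hzΩ
      have hloc : ∀ e : EuclideanSpace ℝ (Fin n), IsLocalMax (fun t : ℝ => F (z + t • e)) 0 := by
        intro e
        have h0 : z + (0:ℝ) • e = z := by simp
        have hcontline : Continuous (fun t : ℝ => z + t • e) :=
          continuous_const.add (continuous_id.smul continuous_const)
        have hmem : ∀ᶠ t in 𝓝 (0:ℝ), z + t • e ∈ Ω := by
          have := hcontline.continuousAt (x := (0:ℝ)).preimage_mem_nhds
            (hΩopen.mem_nhds (show z + (0:ℝ) • e ∈ Ω by rwa [h0]))
          exact this
        filter_upwards [hmem] with t ht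
        have : F (z + t • e) ≤ F z := hzmax (subset_closure ht)
        simpa [h0] using this
      have htest : ∀ i : Fin n,
          deriv (deriv (fun t : ℝ => w (z + t • (EuclideanSpace.single i 1)))) 0 ≤ -(2*ε) := by
        intro i
        set e := (EuclideanSpace.single i (1:ℝ)) with he
        have hne : ‖e‖ = 1 := by simp [he, EuclideanSpace.norm_single]
        have hpoly : ∀ t : ℝ, ‖z + t • e‖^2
            = ‖z‖^2 + t * (2 * inner ℝ z e) + t^2 := by
          intro t
          rw [norm_add_sq_real, real_inner_smul_right, norm_smul]
          simp [hne, mul_pow, sq_abs]; ring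
        have hFline : (fun t : ℝ => F (z + t • e))
            = fun t => w (z + t • e) + ε * (‖z‖^2 + t * (2 * inner ℝ z e) + t^2) := by
          funext t; rw [hF]; simp only []; rw [hpoly t]
        have hcd : ContDiffAt ℝ 2 (fun t : ℝ => w (z + t • e)) 0 :=
          aux_contDiffAt_line hΩopen hreg hzΩ e
        have hcdq : ContDiffAt ℝ 2 (fun t : ℝ => ε * (‖z‖^2 + t * (2 * inner ℝ z e) + t^2)) 0 :=
          (contDiff_const.mul ((contDiff_const.add (contDiff_id.mul contDiff_const)).add
            (contDiff_id.pow 2))).contDiffAt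
        have hcdF : ContDiffAt ℝ 2 (fun t : ℝ => F (z + t • e)) 0 := by
          rw [hFline]; exact hcd.add hcdq
        have hmax0 : IsLocalMax (fun t : ℝ => F (z + t • e)) 0 := hloc e
        have htest0 := aux_second_deriv_test hcdF hmax0
        have hq : ∀ t : ℝ, HasDerivAt (fun s : ℝ => ε * (‖z‖^2 + s * (2 * inner ℝ z e) + s^2))
            (ε * ((2 * inner ℝ z e) + 2*t)) t := by
          intro t
          have : HasDerivAt (fun s : ℝ => ‖z‖^2 + s * (2 * inner ℝ z e) + s^2)
              ((2 * inner ℝ z e) + 2*t) t := by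
            have ha := ((hasDerivAt_id t).mul_const (2 * inner ℝ z e)).const_add (‖z‖^2)
            have hb := (hasDerivAt_pow 2 t)
            exact (ha.add hb).congr_deriv (by norm_num)
          simpa using this.const_mul ε
        have hd1 : deriv (fun t : ℝ => F (z + t • e)) =ᶠ[𝓝 (0:ℝ)]
            fun t => deriv (fun s : ℝ => w (z + s • e)) t + ε * ((2 * inner ℝ z e) + 2*t) := by
          filter_upwards [hcd.eventually (by norm_num)] with t ht
          rw [hFline]
          exact ((ht.differentiableAt two_ne_zero).hasDerivAt.add (hq t)).deriv
        rw [hd1.deriv_eq] at htest0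
        have hd2 : HasDerivAt (fun t : ℝ =>
            deriv (fun s : ℝ => w (z + s • e)) t + ε * ((2 * inner ℝ z e) + 2*t))
            (deriv (deriv (fun s : ℝ => w (z + s • e))) 0 + ε * 2) 0 := by
          have hlin : HasDerivAt (fun t : ℝ => ε * ((2 * inner ℝ z e) + 2*t)) (ε * 2) 0 := by
            have := ((hasDerivAt_id (0:ℝ)).const_mul 2).const_add (2 * inner ℝ z e)
            simpa using (this.const_mul ε)
          exact (aux_hasDerivAt_deriv hcd).add hlin
        rw [hd2.deriv] at htest0
        linarith
      have hsum := hsub z hzΩ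
      have hsum2 : ∑ i : Fin n,
          deriv (deriv (fun t : ℝ => w (z + t • (EuclideanSpace.single i 1)))) 0
          ≤ ∑ _i : Fin n, -(2*ε) := Finset.sum_le_sum (fun i _ => htest i)
      rw [Finset.sum_const] at hsum2
      simp only [Finset.card_univ, Fintype.card_fin, nsmul_eq_mul] at hsum2
      have : (0:ℝ) < n := by exact_mod_cast hn
      nlinarith
    have hzfr : z ∈ frontier Ω := by
      rw [hΩopen.frontier_eq]; exact ⟨hzcl, hznotin⟩
    have hzR : ‖z‖ ≤ R := by simpa [Metric.mem_closedBall] using hR hzcl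
    have h1 : F y ≤ F z := hzmax hy
    have h2 : F z ≤ ε * R^2 := by
      have := hbd z hzfr
      have hsq : ‖z‖^2 ≤ R^2 := by nlinarith [norm_nonneg z]
      rw [hF]; simp only []
      nlinarith
    calc w y + ε * ‖y‖^2 = F y := rfl
      _ ≤ F z := h1
      _ ≤ ε * R^2 := h2
  by_contra hwy
  push_neg at hwy
  have hS : (0:ℝ) < R^2 + ‖y‖^2 + 1 := by positivity
  have hε : 0 < w y / (R^2 + ‖y‖^2 + 1) := by positivity
  have := key _ hε
  have hεS : w y / (R^2 + ‖y‖^2 + 1) * (R^2 + ‖y‖^2 + 1) = w y :=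
    div_mul_cancel₀ _ (ne_of_gt hS)
  have hny : 0 ≤ ‖y‖^2 := by positivity
  nlinarith [hεS, mul_nonneg hε.le hny, hε]

end Aux

set_option maxHeartbeats 1000000 in
/-- Let `Ω ⊆ ℝⁿ` be a bounded domain with `C²` boundary (encoded through its
exterior unit normal `ν` and the interior-ball condition), `f` smooth on `∂Ω`, `m ≥ 1` an
integer, and let `u`, `v` be the harmonic extensions of `f` and `f^{2m}` to `Ω`.  `Du` and `Dv`
denote the exterior normal derivatives `∂u/∂ν`, `∂v/∂ν` on `∂Ω`, i.e. the values of the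
Dirichlet-to-Neumann operator `𝒟f` and `𝒟(f^{2m})`.  Then at every boundary point the exterior
normal derivative of `w = u^{2m} − v` is nonnegative: `∂w/∂ν ≥ 0`, i.e.
`𝒟(f^{2m})(x) = ∂v/∂ν(x) ≤ 2m f(x)^{2m−1} ∂u/∂ν(x) = 2m f(x)^{2m−1} 𝒟f(x)`. -/
theorem stmt_14 {n : ℕ} (Ω : Set (EuclideanSpace ℝ (Fin n)))
    (hΩopen : IsOpen Ω) (hΩbdd : Bornology.IsBounded Ω)
    (ν : EuclideanSpace ℝ (Fin n) → EuclideanSpace ℝ (Fin n))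
    (hν_unit : ∀ x ∈ frontier Ω, ‖ν x‖ = 1)
    (hν_ext : ∀ x ∈ frontier Ω, ∃ ε > (0:ℝ), ∀ t ∈ Set.Ioo (0:ℝ) ε,
        x + t • ν x ∉ closure Ω ∧ x - t • ν x ∈ Ω)
    (hball : ∀ x ∈ frontier Ω, ∃ r > (0:ℝ), Metric.ball (x - r • ν x) r ⊆ Ω)
    (m : ℕ) (hm : 1 ≤ m)
    (f u v : EuclideanSpace ℝ (Fin n) → ℝ)
    (hf : ContinuousOn f (frontier Ω))
    (hucont : ContinuousOn u (closure Ω)) (hvcont : ContinuousOn v (closure Ω))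
    (hureg : ContDiffOn ℝ 2 u Ω) (hvreg : ContDiffOn ℝ 2 v Ω)
    (huharm : ∀ x ∈ Ω, laplacian u x = 0) (hvharm : ∀ x ∈ Ω, laplacian v x = 0)
    (hubd : ∀ x ∈ frontier Ω, u x = f x)
    (hvbd : ∀ x ∈ frontier Ω, v x = f x ^ (2 * m))
    (Du Dv : EuclideanSpace ℝ (Fin n) → ℝ)
    (hDu : ∀ x ∈ frontier Ω,
        HasDerivWithinAt (fun t : ℝ => u (x + t • ν x)) (Du x) (Set.Iic 0) 0)
    (hDv : ∀ x ∈ frontier Ω,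
        HasDerivWithinAt (fun t : ℝ => v (x + t • ν x)) (Dv x) (Set.Iic 0) 0) :
    ∀ x ∈ frontier Ω,
      0 ≤ (2 * (m : ℝ)) * f x ^ (2 * m - 1) * Du x - Dv x ∧
      Dv x ≤ (2 * (m : ℝ)) * f x ^ (2 * m - 1) * Du x := by
  intro x hx
  obtain ⟨ε, hε, hεprop⟩ := hν_ext x hx
  -- the subharmonicity hypothesis of the maximum principle
  have hsub : ∀ z ∈ Ω, 0 ≤ ∑ i : Fin n,
      deriv (deriv (fun t : ℝ =>
        (u (z + t • (EuclideanSpace.single i 1)))^(2*m)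
          - v (z + t • (EuclideanSpace.single i 1)))) 0 := by
    intro z hz
    have hterm : ∀ i : Fin n,
        deriv (deriv (fun t : ℝ =>
          (u (z + t • (EuclideanSpace.single i 1)))^(2*m)
            - v (z + t • (EuclideanSpace.single i 1)))) 0
        = ((2*m : ℕ):ℝ) * ((2*m-1 : ℕ):ℝ) * u z ^ (2*m-2)
            * (deriv (fun t : ℝ => u (z + t • (EuclideanSpace.single i 1))) 0)^2
          + ((2*m : ℕ):ℝ) * u z ^ (2*m-1)
            * deriv (deriv (fun t : ℝ => u (z + t • (EuclideanSpace.single i 1)))) 0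
          - deriv (deriv (fun t : ℝ => v (z + t • (EuclideanSpace.single i 1)))) 0 := by
      intro i
      have := aux_d2_pow_sub (aux_contDiffAt_line hΩopen hureg hz (EuclideanSpace.single i 1))
        (aux_contDiffAt_line hΩopen hvreg hz (EuclideanSpace.single i 1)) (2*m)
      simpa [zero_smul, add_zero] using this
    rw [Finset.sum_congr rfl (fun i _ => hterm i)]
    have hu2 : ∑ i : Fin n,
        deriv (deriv (fun t : ℝ => u (z + t • (EuclideanSpace.single i 1)))) 0 = 0 := by
      rw [Finset.sum_congr rfl
        (fun i _ => aux_line_d2 hΩopen hureg hz (EuclideanSpace.single i 1))]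
      exact huharm z hz
    have hv2 : ∑ i : Fin n,
        deriv (deriv (fun t : ℝ => v (z + t • (EuclideanSpace.single i 1)))) 0 = 0 := by
      rw [Finset.sum_congr rfl
        (fun i _ => aux_line_d2 hΩopen hvreg hz (EuclideanSpace.single i 1))]
      exact hvharm z hz
    rw [Finset.sum_sub_distrib, Finset.sum_add_distrib, ← Finset.mul_sum, ← Finset.mul_sum,
      hu2, hv2]
    have hA : 0 ≤ ((2*m : ℕ):ℝ) * ((2*m-1 : ℕ):ℝ) * u z ^ (2*m-2) :=
      mul_nonneg (mul_nonneg (Nat.cast_nonneg _) (Nat.cast_nonneg _))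
        (Even.pow_nonneg ⟨m-1, by omega⟩ _)
    have hSq : 0 ≤ ∑ i : Fin n,
        (deriv (fun t : ℝ => u (z + t • (EuclideanSpace.single i 1))) 0)^2 :=
      Finset.sum_nonneg fun i _ => sq_nonneg _
    simpa using mul_nonneg hA hSq
  -- w ≤ 0 on the closure
  have key : ∀ y ∈ closure Ω, u y ^ (2*m) - v y ≤ 0 := by
    rcases Nat.eq_zero_or_pos n with hn | hn
    · exfalso
      obtain ⟨hout, hin⟩ := hεprop (ε/2) ⟨half_pos hε, half_lt_self hε⟩
      subst hn
      haveI : Subsingleton (EuclideanSpace ℝ (Fin 0)) :=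
        ⟨fun a b => PiLp.ext fun i => i.elim0⟩
      exact hout (subset_closure
        (by rwa [Subsingleton.elim (x + (ε/2) • ν x) (x - (ε/2) • ν x)]))
    · have hbd' : ∀ y ∈ frontier Ω, u y ^ (2*m) - v y ≤ 0 := by
        intro y hy
        rw [hubd y hy, hvbd y hy]
        simp
      exact aux_max_principle hn hΩopen hΩbdd ((hucont.pow _).sub hvcont)
        ((hureg.pow _).sub hvreg) hsub hbd'
  -- the boundary normal derivative of w is nonnegative
  have hW : HasDerivWithinAt (fun t : ℝ => (u (x + t • ν x))^(2*m) - v (x + t • ν x))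
      ((↑(2*m) * (u (x + (0:ℝ) • ν x))^(2*m-1) * Du x) - Dv x) (Set.Iic 0) 0 :=
    ((hDu x hx).pow (2*m)).sub (hDv x hx)
  simp only [zero_smul, add_zero, hubd x hx] at hW
  have hcast : ((2*m : ℕ):ℝ) = 2*(m:ℝ) := by push_cast; ring
  rw [hcast] at hW
  have hDnn : 0 ≤ 2*(m:ℝ) * f x ^ (2*m-1) * Du x - Dv x := by
    rw [hasDerivWithinAt_iff_tendsto_slope] at hW
    have hsetEq : Set.Iic (0:ℝ) \ {0} = Set.Iio 0 := by
      ext t; simp [lt_iff_le_and_ne]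
    rw [hsetEq] at hW
    refine ge_of_tendsto hW ?_
    have hmem : Set.Ioo (-ε) 0 ∈ 𝓝[<] (0:ℝ) :=
      Ioo_mem_nhdsLT_of_mem ⟨by linarith, le_rfl⟩
    filter_upwards [hmem] with t ht
    have htΩ : x + t • ν x ∈ Ω := by
      have := (hεprop (-t) ⟨by linarith [ht.2], by linarith [ht.1]⟩).2
      rwa [neg_smul, sub_neg_eq_add] at this
    have hW0 : (u (x + (0:ℝ) • ν x))^(2*m) - v (x + (0:ℝ) • ν x) = 0 := by
      rw [zero_smul, add_zero, hubd x hx, hvbd x hx]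
      ring
    have hWt : (u (x + t • ν x))^(2*m) - v (x + t • ν x) ≤ 0 := key _ (subset_closure htΩ)
    rw [slope_def_field]
    refine div_nonneg_iff.mpr (Or.inr ⟨?_, ?_⟩)
    · simpa [hubd x hx, hvbd x hx] using hWt
    · simpa using ht.2.le
  exact ⟨hDnn, by linarith⟩
end
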